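/- In the additive group of rationals ℚ with the subgroup-hull operator C, every strongly C-independent subset has at most one element; consequently every maximal strongly C-independent subset B satisfies C(B) ≠ ℚ. -/

import Mathlib

/-- A subset of `ℚ` is strongly independent with respect to the
subgroup-hull operator. -/
def StronglyIndepQ (B : Set ℚ) : Prop :=
  B ∩ (AddSubgroup.closure (∅ : Set ℚ) : Set ℚ) = ∅ ∧
  ∀ B₁ B₂ : Set ℚ, B₁ ⊆ B → B₂ ⊆ B →
    (AddSubgroup.closure B₁ : Set ℚ) ∩ (AddSubgroup.closure B₂ : Set ℚ)
      = (AddSubgroup.closure (B₁ ∩ B₂) : Set ℚ)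

lemma stronglyIndepQ_ne_zero {B : Set ℚ} (hB : StronglyIndepQ B) {x : ℚ}
    (hx : x ∈ B) : x ≠ 0 := by
  rintro rfl
  have h : (0:ℚ) ∈ B ∩ (AddSubgroup.closure (∅ : Set ℚ) : Set ℚ) :=
    ⟨hx, AddSubgroup.zero_mem _⟩
  rw [hB.1] at h
  exact h

lemma stronglyIndepQ_subsingleton {B : Set ℚ} (hB : StronglyIndepQ B) :
    B.Subsingleton := by
  intro x hx y hy
  by_contra hxy
  have hx0 : x ≠ 0 := stronglyIndepQ_ne_zero hB hx
  have hy0 : y ≠ 0 := stronglyIndepQ_ne_zero hB hy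
  have hsub := hB.2 {x} {y} (Set.singleton_subset_iff.mpr hx)
    (Set.singleton_subset_iff.mpr hy)
  have hdisj : ({x} : Set ℚ) ∩ {y} = ∅ := by
    ext z
    simp only [Set.mem_inter_iff, Set.mem_singleton_iff, Set.mem_empty_iff_false,
      iff_false, not_and]
    rintro rfl rfl
    exact hxy rfl
  have hxd : (x.den : ℚ) * x = x.num := by
    rw [mul_comm]; exact_mod_cast Rat.mul_den_eq_num x
  have hyd : (y.den : ℚ) * y = y.num := by
    rw [mul_comm]; exact_mod_cast Rat.mul_den_eq_num y
  have hz1 : ((y.num * x.num : ℤ) : ℚ) ∈ (AddSubgroup.closure ({x} : Set ℚ) : Set ℚ) := by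
    rw [SetLike.mem_coe, AddSubgroup.mem_closure_singleton]
    refine ⟨y.num * x.den, ?_⟩
    push_cast
    rw [zsmul_eq_mul]
    push_cast
    rw [mul_assoc, hxd]
  have hz2 : ((y.num * x.num : ℤ) : ℚ) ∈ (AddSubgroup.closure ({y} : Set ℚ) : Set ℚ) := by
    rw [SetLike.mem_coe, AddSubgroup.mem_closure_singleton]
    refine ⟨x.num * y.den, ?_⟩
    rw [zsmul_eq_mul]
    push_cast
    rw [mul_assoc, hyd]
    ring
  have hz : ((y.num * x.num : ℤ) : ℚ) ∈ (AddSubgroup.closure (({x} : Set ℚ) ∩ {y}) : Set ℚ) := by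
    rw [← hsub]; exact ⟨hz1, hz2⟩
  rw [hdisj, AddSubgroup.closure_empty] at hz
  have : ((y.num * x.num : ℤ) : ℚ) = 0 := by simpa using hz
  have hnum : (y.num * x.num : ℤ) = 0 := by exact_mod_cast this
  rcases mul_eq_zero.mp hnum with h | h
  · exact (Rat.num_ne_zero.mpr hy0) h
  · exact (Rat.num_ne_zero.mpr hx0) h

/-- every strongly independent subset of `(ℚ, +)` has at most one
element; consequently every maximal strongly independent subset `B` has
`C(B) ≠ ℚ`. -/
theorem strongly_independent_in_rat_subsingleton :
    (∀ B : Set ℚ, StronglyIndepQ B → B.Subsingleton) ∧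
    (∀ B : Set ℚ, StronglyIndepQ B →
      (∀ B' : Set ℚ, StronglyIndepQ B' → B ⊆ B' → B' = B) →
      (AddSubgroup.closure B : Set ℚ) ≠ Set.univ) := by
  refine ⟨fun B hB => stronglyIndepQ_subsingleton hB, ?_⟩
  intro B hB _ huniv
  rcases (stronglyIndepQ_subsingleton hB).eq_empty_or_singleton with rfl | ⟨a, rfl⟩
  · rw [AddSubgroup.closure_empty] at huniv
    have : (1:ℚ) ∈ ((⊥ : AddSubgroup ℚ) : Set ℚ) := huniv ▸ Set.mem_univ 1
    simpa using this
  · have ha : a ≠ 0 := stronglyIndepQ_ne_zero hB rfl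
    have : a / 2 ∈ (AddSubgroup.closure ({a} : Set ℚ) : Set ℚ) :=
      huniv ▸ Set.mem_univ _
    rw [SetLike.mem_coe, AddSubgroup.mem_closure_singleton] at this
    obtain ⟨n, hn⟩ := this
    rw [zsmul_eq_mul] at hn
    have h2 : ((2 * n : ℤ) : ℚ) = 1 := by
      have hn' : (n : ℚ) * a * 2 = 1 * a := by
        rw [one_mul]; field_simp at hn; linear_combination a * hn
      have : (n : ℚ) * 2 * a = 1 * a := by ring_nf; ring_nf at hn'; linarith [hn']
      have := mul_right_cancel₀ ha this
      push_cast
      linarith [this]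
    have h2' : (2 * n : ℤ) = 1 := by exact_mod_cast h2
    omega
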